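/- arXiv:0910.3414 — 2 statements merged into one kernel-verified Lean document; each statement's English description precedes it below -/
import Mathlib

section
/- For every k ≥ 3, the Poisson bracket map S³H ⊗ SᵏH → S^{k+1}H, given by f ⊗ g ↦ {f,g} for cubic f and degree-k homogeneous g in 2n variables, is surjective. -/
open MvPolynomial

/-- The standard Poisson bracket on polynomials in `2n` variables
`x i = Sum.inl i`, `y i = Sum.inr i`. -/
noncomputable def pb {n : ℕ} (f g : MvPolynomial (Fin n ⊕ Fin n) ℝ) :
    MvPolynomial (Fin n ⊕ Fin n) ℝ :=
  ∑ i : Fin n,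
    (pderiv (Sum.inl i) f * pderiv (Sum.inr i) g -
      pderiv (Sum.inr i) f * pderiv (Sum.inl i) g)

namespace PoissonAux

open Finsupp Sum

variable {n k : ℕ}

lemma degree_eq_sum (d : Fin n ⊕ Fin n →₀ ℕ) : d.degree = ∑ v : Fin n ⊕ Fin n, d v :=
  Finset.sum_subset (Finset.subset_univ _) fun v _ hv => notMem_support_iff.mp hv

lemma degree_add (a b : Fin n ⊕ Fin n →₀ ℕ) : (a + b).degree = a.degree + b.degree := by
  simp [degree_eq_sum, Finset.sum_add_distrib]

lemma degree_single (w : Fin n ⊕ Fin n) (m : ℕ) : (Finsupp.single w m).degree = m := by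
  simp [degree_eq_sum, Finsupp.single_apply]

lemma degree_tsub {a b : Fin n ⊕ Fin n →₀ ℕ} (h : b ≤ a) :
    (a - b).degree = a.degree - b.degree := by
  have h1 : (a - b) + b = a := tsub_add_cancel_of_le h
  have h2 := degree_add (a - b) b
  rw [h1] at h2; omega

lemma pb_monomial (a b : Fin n ⊕ Fin n →₀ ℕ) :
    pb (monomial a (1:ℝ)) (monomial b (1:ℝ)) =
      ∑ i : Fin n,
        (monomial ((a - Finsupp.single (inl i) 1) + (b - Finsupp.single (inr i) 1))
            ((a (inl i) : ℝ) * (b (inr i) : ℝ)) -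
          monomial ((a - Finsupp.single (inr i) 1) + (b - Finsupp.single (inl i) 1))
            ((a (inr i) : ℝ) * (b (inl i) : ℝ))) := by
  unfold pb
  refine Finset.sum_congr rfl fun i _ => ?_
  rw [pderiv_monomial, pderiv_monomial, pderiv_monomial, pderiv_monomial,
    monomial_mul, monomial_mul]
  simp

lemma mem_of_pb (M : Submodule ℝ (MvPolynomial (Fin n ⊕ Fin n) ℝ))
    (hM : ∀ f g : MvPolynomial (Fin n ⊕ Fin n) ℝ,
      f.IsHomogeneous 3 → g.IsHomogeneous k → pb f g ∈ M)
    {a b d : Fin n ⊕ Fin n →₀ ℕ} (ha : a.degree = 3) (hb : b.degree = k)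
    {c : ℝ} (hc : c ≠ 0) (hpb : pb (monomial a 1) (monomial b 1) = monomial d c) :
    monomial d (1:ℝ) ∈ M := by
  have hmem := hM (monomial a 1) (monomial b 1)
    (isHomogeneous_monomial 1 ha) (isHomogeneous_monomial 1 hb)
  rw [hpb] at hmem
  have h1 : (monomial d (1:ℝ) : MvPolynomial (Fin n ⊕ Fin n) ℝ) = c⁻¹ • monomial d c := by
    rw [smul_monomial, smul_eq_mul, inv_mul_cancel₀ hc]
  rw [h1]
  exact M.smul_mem _ hmem

set_option maxHeartbeats 1000000 in
/-- Case I: `f = x i ^ 2 * y i`. -/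
lemma caseI (M : Submodule ℝ (MvPolynomial (Fin n ⊕ Fin n) ℝ))
    (hM : ∀ f g : MvPolynomial (Fin n ⊕ Fin n) ℝ,
      f.IsHomogeneous 3 → g.IsHomogeneous k → pb f g ∈ M)
    (d : Fin n ⊕ Fin n →₀ ℕ) (hd : d.degree = k + 1) (i : Fin n)
    (h1 : 1 ≤ d (inl i)) (hne : 2 * d (inr i) + 1 ≠ d (inl i)) :
    monomial d (1:ℝ) ∈ M := by
  set a : Fin n ⊕ Fin n →₀ ℕ := Finsupp.single (inl i) 2 + Finsupp.single (inr i) 1 with ha_def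
  set b : Fin n ⊕ Fin n →₀ ℕ := d - Finsupp.single (inl i) 1 with hb_def
  have hble : Finsupp.single (inl i) 1 ≤ d := Finsupp.single_le_iff.mpr h1
  have ha : a.degree = 3 := by rw [ha_def, degree_add, degree_single, degree_single]
  have hb : b.degree = k := by rw [hb_def, degree_tsub hble, degree_single, hd]; omega
  refine mem_of_pb M hM ha hb
    (c := ((2 * d (inr i) : ℕ) : ℝ) - ((d (inl i) - 1 : ℕ) : ℝ)) ?_ ?_
  · intro h0
    have h3 : ((2 * d (inr i) : ℕ) : ℝ) = ((d (inl i) - 1 : ℕ) : ℝ) := by linarith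
    have h4 : 2 * d (inr i) = d (inl i) - 1 := by exact_mod_cast h3
    omega
  · rw [pb_monomial]
    rw [Finset.sum_eq_single i]
    · have hal : (a (inl i) : ℝ) = 2 := by simp [ha_def, Finsupp.single_apply]
      have har : (a (inr i) : ℝ) = 1 := by simp [ha_def, Finsupp.single_apply]
      have hbr : b (inr i) = d (inr i) := by simp [hb_def, Finsupp.single_apply]
      have hbl : b (inl i) = d (inl i) - 1 := by simp [hb_def, Finsupp.single_apply]
      rw [hal, har, hbr, hbl, one_mul]
      have e1 : (monomial ((a - Finsupp.single (inl i) 1) + (b - Finsupp.single (inr i) 1))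
          ((2 : ℝ) * (d (inr i) : ℝ)) : MvPolynomial (Fin n ⊕ Fin n) ℝ)
          = monomial d ((2 : ℝ) * (d (inr i) : ℝ)) := by
        rcases Nat.eq_zero_or_pos (d (inr i)) with h0 | hpos
        · rw [h0]; norm_num
        · have hE : (a - Finsupp.single (inl i) 1) + (b - Finsupp.single (inr i) 1) = d := by
            ext v
            simp only [ha_def, hb_def, Finsupp.coe_add, Finsupp.coe_tsub, Pi.add_apply,
              Pi.sub_apply, Finsupp.single_apply]
            split_ifs <;> subst_vars <;> simp_all <;> omega
          rw [hE]
      have e2 : (monomial ((a - Finsupp.single (inr i) 1) + (b - Finsupp.single (inl i) 1))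
          (((d (inl i) - 1 : ℕ) : ℝ)) : MvPolynomial (Fin n ⊕ Fin n) ℝ)
          = monomial d ((d (inl i) - 1 : ℕ) : ℝ) := by
        rcases Nat.lt_or_ge (d (inl i)) 2 with h0 | h2
        · have h3 : d (inl i) - 1 = 0 := by omega
          rw [h3]; norm_num
        · have hE : (a - Finsupp.single (inr i) 1) + (b - Finsupp.single (inl i) 1) = d := by
            ext v
            simp only [ha_def, hb_def, Finsupp.coe_add, Finsupp.coe_tsub, Pi.add_apply,
              Pi.sub_apply, Finsupp.single_apply]
            split_ifs <;> subst_vars <;> simp_all <;> omega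
          rw [hE]
      rw [e1, e2, ← map_sub]
      push_cast
      ring_nf
    · intro t _ hti
      have g1 : a (inl t) = 0 := by simp [ha_def, Finsupp.single_apply, Ne.symm hti]
      have g2 : a (inr t) = 0 := by simp [ha_def, Finsupp.single_apply, Ne.symm hti]
      rw [g1, g2]; norm_num
    · simp

set_option maxHeartbeats 1000000 in
/-- Case II: `f = y i ^ 2 * x i`. -/
lemma caseII (M : Submodule ℝ (MvPolynomial (Fin n ⊕ Fin n) ℝ))
    (hM : ∀ f g : MvPolynomial (Fin n ⊕ Fin n) ℝ,
      f.IsHomogeneous 3 → g.IsHomogeneous k → pb f g ∈ M)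
    (d : Fin n ⊕ Fin n →₀ ℕ) (hd : d.degree = k + 1) (i : Fin n)
    (h1 : 1 ≤ d (inr i)) (hne : 2 * d (inl i) + 1 ≠ d (inr i)) :
    monomial d (1:ℝ) ∈ M := by
  set a : Fin n ⊕ Fin n →₀ ℕ := Finsupp.single (inr i) 2 + Finsupp.single (inl i) 1 with ha_def
  set b : Fin n ⊕ Fin n →₀ ℕ := d - Finsupp.single (inr i) 1 with hb_def
  have hble : Finsupp.single (inr i) 1 ≤ d := Finsupp.single_le_iff.mpr h1
  have ha : a.degree = 3 := by rw [ha_def, degree_add, degree_single, degree_single]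
  have hb : b.degree = k := by rw [hb_def, degree_tsub hble, degree_single, hd]; omega
  refine mem_of_pb M hM ha hb
    (c := ((d (inr i) - 1 : ℕ) : ℝ) - ((2 * d (inl i) : ℕ) : ℝ)) ?_ ?_
  · intro h0
    have h3 : ((d (inr i) - 1 : ℕ) : ℝ) = ((2 * d (inl i) : ℕ) : ℝ) := by linarith
    have h4 : d (inr i) - 1 = 2 * d (inl i) := by exact_mod_cast h3
    omega
  · rw [pb_monomial]
    rw [Finset.sum_eq_single i]
    · have hal : (a (inl i) : ℝ) = 1 := by simp [ha_def, Finsupp.single_apply]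
      have har : (a (inr i) : ℝ) = 2 := by simp [ha_def, Finsupp.single_apply]
      have hbr : b (inr i) = d (inr i) - 1 := by simp [hb_def, Finsupp.single_apply]
      have hbl : b (inl i) = d (inl i) := by simp [hb_def, Finsupp.single_apply]
      rw [hal, har, hbr, hbl, one_mul]
      have e1 : (monomial ((a - Finsupp.single (inl i) 1) + (b - Finsupp.single (inr i) 1))
          (((d (inr i) - 1 : ℕ) : ℝ)) : MvPolynomial (Fin n ⊕ Fin n) ℝ)
          = monomial d ((d (inr i) - 1 : ℕ) : ℝ) := by
        rcases Nat.lt_or_ge (d (inr i)) 2 with h0 | h2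
        · have h3 : d (inr i) - 1 = 0 := by omega
          rw [h3]; norm_num
        · have hE : (a - Finsupp.single (inl i) 1) + (b - Finsupp.single (inr i) 1) = d := by
            ext v
            simp only [ha_def, hb_def, Finsupp.coe_add, Finsupp.coe_tsub, Pi.add_apply,
              Pi.sub_apply, Finsupp.single_apply]
            split_ifs <;> subst_vars <;> simp_all <;> omega
          rw [hE]
      have e2 : (monomial ((a - Finsupp.single (inr i) 1) + (b - Finsupp.single (inl i) 1))
          ((2 : ℝ) * (d (inl i) : ℝ)) : MvPolynomial (Fin n ⊕ Fin n) ℝ)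
          = monomial d ((2 : ℝ) * (d (inl i) : ℝ)) := by
        rcases Nat.eq_zero_or_pos (d (inl i)) with h0 | hpos
        · rw [h0]; norm_num
        · have hE : (a - Finsupp.single (inr i) 1) + (b - Finsupp.single (inl i) 1) = d := by
            ext v
            simp only [ha_def, hb_def, Finsupp.coe_add, Finsupp.coe_tsub, Pi.add_apply,
              Pi.sub_apply, Finsupp.single_apply]
            split_ifs <;> subst_vars <;> simp_all <;> omega
          rw [hE]
      rw [e1, e2, ← map_sub]
      push_cast
      ring_nf
    · intro t _ hti
      have g1 : a (inl t) = 0 := by simp [ha_def, Finsupp.single_apply, Ne.symm hti]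
      have g2 : a (inr t) = 0 := by simp [ha_def, Finsupp.single_apply, Ne.symm hti]
      rw [g1, g2]; norm_num
    · simp

set_option maxHeartbeats 1000000 in
/-- Case III: `f = x i ^ 2 * y j`, mixed squarefree case. -/
lemma caseIII (M : Submodule ℝ (MvPolynomial (Fin n ⊕ Fin n) ℝ))
    (hM : ∀ f g : MvPolynomial (Fin n ⊕ Fin n) ℝ,
      f.IsHomogeneous 3 → g.IsHomogeneous k → pb f g ∈ M)
    (hk1 : 1 ≤ k)
    (d : Fin n ⊕ Fin n →₀ ℕ) (hd : d.degree = k + 1) (i j : Fin n) (hij : i ≠ j)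
    (hi : 1 ≤ d (inl i)) (hj : 1 ≤ d (inr j))
    (hri : d (inr i) = 0) (hlj : d (inl j) = 0) :
    monomial d (1:ℝ) ∈ M := by
  set a : Fin n ⊕ Fin n →₀ ℕ := Finsupp.single (inl i) 2 + Finsupp.single (inr j) 1 with ha_def
  set b : Fin n ⊕ Fin n →₀ ℕ :=
    (d - Finsupp.single (inl i) 1 - Finsupp.single (inr j) 1) + Finsupp.single (inr i) 1
    with hb_def
  have hle1 : Finsupp.single (inl i) 1 ≤ d := Finsupp.single_le_iff.mpr hi
  have hle2 : Finsupp.single (inr j) 1 ≤ d - Finsupp.single (inl i) 1 := by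
    refine Finsupp.single_le_iff.mpr ?_
    rw [Finsupp.tsub_apply]
    have hv : Finsupp.single (inl i : Fin n ⊕ Fin n) 1 (inr j) = 0 := by
      rw [Finsupp.single_apply]; simp
    rw [hv]
    omega
  have ha : a.degree = 3 := by rw [ha_def, degree_add, degree_single, degree_single]
  have hb : b.degree = k := by
    rw [hb_def, degree_add, degree_tsub hle2, degree_tsub hle1, degree_single, degree_single,
      degree_single, hd]
    omega
  refine mem_of_pb M hM ha hb (c := (2 : ℝ)) (by norm_num) ?_
  rw [pb_monomial]
  rw [Finset.sum_eq_single i]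
  · have hal : (a (inl i) : ℝ) = 2 := by
      simp [ha_def, Finsupp.single_apply]
    have har : (a (inr i) : ℝ) = 0 := by
      simp [ha_def, Finsupp.single_apply, Ne.symm hij]
    have hbr : b (inr i) = 1 := by
      simp [hb_def, Finsupp.tsub_apply, Finsupp.single_apply, Ne.symm hij, hri]
    rw [hal, har, hbr, zero_mul]
    have hE : (a - Finsupp.single (inl i) 1) + (b - Finsupp.single (inr i) 1) = d := by
      ext v
      simp only [ha_def, hb_def, Finsupp.coe_add, Finsupp.coe_tsub, Pi.add_apply,
        Pi.sub_apply, Finsupp.single_apply]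
      split_ifs <;> subst_vars <;> simp_all <;> omega
    rw [hE]
    norm_num
  · intro t _ hti
    have g1 : a (inl t) = 0 := by
      simp [ha_def, Finsupp.single_apply, Ne.symm hti]
    rcases eq_or_ne t j with rfl | htj
    · have g2 : b (inl t) = 0 := by
        simp [hb_def, Finsupp.tsub_apply, Finsupp.single_apply, hlj, hti]
      rw [g1, g2]; norm_num
    · have g2 : a (inr t) = 0 := by
        simp [ha_def, Finsupp.single_apply, Ne.symm htj]
      rw [g1, g2]; norm_num
  · simp

set_option maxHeartbeats 1000000 in
/-- Case IV: `f = x i * x j * y i`, pure-`x` case. -/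
lemma caseIV (M : Submodule ℝ (MvPolynomial (Fin n ⊕ Fin n) ℝ))
    (hM : ∀ f g : MvPolynomial (Fin n ⊕ Fin n) ℝ,
      f.IsHomogeneous 3 → g.IsHomogeneous k → pb f g ∈ M)
    (d : Fin n ⊕ Fin n →₀ ℕ) (hd : d.degree = k + 1) (i j : Fin n) (hij : i ≠ j)
    (hi : 1 ≤ d (inl i)) (hj : 1 ≤ d (inl j))
    (hr : ∀ t, d (inr t) = 0) :
    monomial d (1:ℝ) ∈ M := by
  set a : Fin n ⊕ Fin n →₀ ℕ :=
    Finsupp.single (inl i) 1 + Finsupp.single (inl j) 1 + Finsupp.single (inr i) 1 with ha_def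
  set b : Fin n ⊕ Fin n →₀ ℕ := d - Finsupp.single (inl j) 1 with hb_def
  have hle : Finsupp.single (inl j) 1 ≤ d := Finsupp.single_le_iff.mpr hj
  have ha : a.degree = 3 := by
    rw [ha_def, degree_add, degree_add, degree_single, degree_single, degree_single]
  have hb : b.degree = k := by rw [hb_def, degree_tsub hle, degree_single, hd]; omega
  refine mem_of_pb M hM ha hb (c := -(d (inl i) : ℝ)) ?_ ?_
  · simp only [ne_eq, neg_eq_zero, Nat.cast_eq_zero]
    omega
  · rw [pb_monomial]
    rw [Finset.sum_eq_single i]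
    · have har : (a (inr i) : ℝ) = 1 := by
        simp [ha_def, Finsupp.single_apply]
      have hbr : b (inr i) = 0 := by
        simp [hb_def, Finsupp.tsub_apply, Finsupp.single_apply, hr i]
      have hbl : b (inl i) = d (inl i) := by
        simp [hb_def, Finsupp.tsub_apply, Finsupp.single_apply, Ne.symm hij]
      have hE : (a - Finsupp.single (inr i) 1) + (b - Finsupp.single (inl i) 1) = d := by
        ext v
        simp only [ha_def, hb_def, Finsupp.coe_add, Finsupp.coe_tsub, Pi.add_apply,
          Pi.sub_apply, Finsupp.single_apply]
        split_ifs <;> subst_vars <;> simp_all <;> omega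
      rw [har, hbr, hbl, one_mul]
      simp only [Nat.cast_zero, mul_zero, monomial_zero, zero_sub]
      rw [hE, ← map_neg]
    · intro t _ hti
      have g1 : b (inr t) = 0 := by
        simp [hb_def, Finsupp.tsub_apply, Finsupp.single_apply, hr t]
      have g2 : a (inr t) = 0 := by
        simp [ha_def, Finsupp.single_apply, Ne.symm hti]
      rw [g1, g2]; norm_num
    · simp

set_option maxHeartbeats 1000000 in
/-- Case V: `f = y i * y j * x i`, pure-`y` case. -/
lemma caseV (M : Submodule ℝ (MvPolynomial (Fin n ⊕ Fin n) ℝ))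
    (hM : ∀ f g : MvPolynomial (Fin n ⊕ Fin n) ℝ,
      f.IsHomogeneous 3 → g.IsHomogeneous k → pb f g ∈ M)
    (d : Fin n ⊕ Fin n →₀ ℕ) (hd : d.degree = k + 1) (i j : Fin n) (hij : i ≠ j)
    (hi : 1 ≤ d (inr i)) (hj : 1 ≤ d (inr j))
    (hl : ∀ t, d (inl t) = 0) :
    monomial d (1:ℝ) ∈ M := by
  set a : Fin n ⊕ Fin n →₀ ℕ :=
    Finsupp.single (inr i) 1 + Finsupp.single (inr j) 1 + Finsupp.single (inl i) 1 with ha_def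
  set b : Fin n ⊕ Fin n →₀ ℕ := d - Finsupp.single (inr j) 1 with hb_def
  have hle : Finsupp.single (inr j) 1 ≤ d := Finsupp.single_le_iff.mpr hj
  have ha : a.degree = 3 := by
    rw [ha_def, degree_add, degree_add, degree_single, degree_single, degree_single]
  have hb : b.degree = k := by rw [hb_def, degree_tsub hle, degree_single, hd]; omega
  refine mem_of_pb M hM ha hb (c := (d (inr i) : ℝ)) ?_ ?_
  · simp only [ne_eq, Nat.cast_eq_zero]
    omega
  · rw [pb_monomial]
    rw [Finset.sum_eq_single i]
    · have hal : (a (inl i) : ℝ) = 1 := by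
        simp [ha_def, Finsupp.single_apply]
      have hbr : b (inr i) = d (inr i) := by
        simp [hb_def, Finsupp.tsub_apply, Finsupp.single_apply, Ne.symm hij]
      have hbl : b (inl i) = 0 := by
        simp [hb_def, Finsupp.tsub_apply, Finsupp.single_apply, hl i]
      have hE : (a - Finsupp.single (inl i) 1) + (b - Finsupp.single (inr i) 1) = d := by
        ext v
        simp only [ha_def, hb_def, Finsupp.coe_add, Finsupp.coe_tsub, Pi.add_apply,
          Pi.sub_apply, Finsupp.single_apply]
        split_ifs <;> subst_vars <;> simp_all <;> omega
      rw [hal, hbr, hbl, one_mul]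
      simp only [Nat.cast_zero, mul_zero, monomial_zero, sub_zero]
      rw [hE]
    · intro t _ hti
      have g1 : a (inl t) = 0 := by
        simp [ha_def, Finsupp.single_apply, Ne.symm hti]
      have g2 : b (inl t) = 0 := by
        simp [hb_def, Finsupp.tsub_apply, Finsupp.single_apply, hl t]
      rw [g1, g2]; norm_num
    · simp

/-- Every monomial of degree `k+1` is in the module. -/
lemma mono_mem (hk : 3 ≤ k) (M : Submodule ℝ (MvPolynomial (Fin n ⊕ Fin n) ℝ))
    (hM : ∀ f g : MvPolynomial (Fin n ⊕ Fin n) ℝ,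
      f.IsHomogeneous 3 → g.IsHomogeneous k → pb f g ∈ M)
    (d : Fin n ⊕ Fin n →₀ ℕ) (hd : d.degree = k + 1) :
    monomial d (1:ℝ) ∈ M := by
  have hsum : (∑ t : Fin n, d (inl t)) + (∑ t : Fin n, d (inr t)) = k + 1 := by
    rw [degree_eq_sum, Fintype.sum_sum_type] at hd
    exact hd
  by_cases hx : ∃ i, 1 ≤ d (inl i) ∧ 2 * d (inr i) + 1 ≠ d (inl i)
  · obtain ⟨i, hi1, hi2⟩ := hx; exact caseI M hM d hd i hi1 hi2
  by_cases hy : ∃ i, 1 ≤ d (inr i) ∧ 2 * d (inl i) + 1 ≠ d (inr i)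
  · obtain ⟨i, hi1, hi2⟩ := hy; exact caseII M hM d hd i hi1 hi2
  push_neg at hx hy
  by_cases hX : ∃ i, 1 ≤ d (inl i)
  · by_cases hY : ∃ j, 1 ≤ d (inr j)
    · obtain ⟨i, hi⟩ := hX; obtain ⟨j, hj⟩ := hY
      have hij : i ≠ j := by
        rintro rfl
        have h1 := hx i hi
        have h2 := hy i hj
        omega
      have h1 : d (inr i) = 0 := by
        by_contra hcon
        have h2 := hy i (by omega)
        have h3 := hx i hi
        omega
      have h2 : d (inl j) = 0 := by
        by_contra hcon
        have h3 := hx j (by omega)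
        have h4 := hy j hj
        omega
      exact caseIII M hM (by omega) d hd i j hij hi hj h1 h2
    · push_neg at hY
      obtain ⟨i, hi⟩ := hX
      have hzero : ∀ t, d (inr t) = 0 := fun t => by have := hY t; omega
      have hexj : ∃ j, j ≠ i ∧ 1 ≤ d (inl j) := by
        by_contra hcon
        push_neg at hcon
        have hs1 : ∑ t : Fin n, d (inl t) = d (inl i) :=
          Finset.sum_eq_single i (fun t _ ht => by have := hcon t ht; omega) (by simp)
        have hs2 : ∑ t : Fin n, d (inr t) = 0 := Finset.sum_eq_zero fun t _ => hzero t
        have h3 := hx i hi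
        have h4 : d (inr i) = 0 := hzero i
        omega
      obtain ⟨j, hji, hj⟩ := hexj
      exact caseIV M hM d hd i j (fun h => hji h.symm) hi hj hzero
  · push_neg at hX
    have hzl : ∀ t, d (inl t) = 0 := fun t => by have := hX t; omega
    have hexi : ∃ i, 1 ≤ d (inr i) := by
      by_contra hcon
      push_neg at hcon
      have hs1 : ∑ t : Fin n, d (inl t) = 0 := Finset.sum_eq_zero fun t _ => hzl t
      have hs2 : ∑ t : Fin n, d (inr t) = 0 :=
        Finset.sum_eq_zero fun t _ => by have := hcon t; omega
      omega
    obtain ⟨i, hi⟩ := hexi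
    have hexj : ∃ j, j ≠ i ∧ 1 ≤ d (inr j) := by
      by_contra hcon
      push_neg at hcon
      have hs1 : ∑ t : Fin n, d (inr t) = d (inr i) :=
        Finset.sum_eq_single i (fun t _ ht => by have := hcon t ht; omega) (by simp)
      have hs2 : ∑ t : Fin n, d (inl t) = 0 := Finset.sum_eq_zero fun t _ => hzl t
      have h3 := hy i hi
      have h4 : d (inl i) = 0 := hzl i
      omega
    obtain ⟨j, hji, hj⟩ := hexj
    exact caseV M hM d hd i j (fun h => hji h.symm) hi hj hzl

end PoissonAux

/-- For every `k ≥ 3` the Poisson bracket map `S³H ⊗ SᵏH → S^{k+1}H` is surjective: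
every homogeneous polynomial of degree `k+1` is a linear combination of brackets
`{f,g}` with `f` cubic and `g` homogeneous of degree `k`. -/
theorem poisson_bracket_S3_Sk_surjective {n : ℕ} (hn : 0 < n) (k : ℕ) (hk : 3 ≤ k)
    (h : MvPolynomial (Fin n ⊕ Fin n) ℝ) (hh : h.IsHomogeneous (k + 1)) :
    h ∈ Submodule.span ℝ
      {p : MvPolynomial (Fin n ⊕ Fin n) ℝ |
        ∃ f g, f.IsHomogeneous 3 ∧ g.IsHomogeneous k ∧ p = pb f g} := by
  set M := Submodule.span ℝ
      {p : MvPolynomial (Fin n ⊕ Fin n) ℝ |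
        ∃ f g, f.IsHomogeneous 3 ∧ g.IsHomogeneous k ∧ p = pb f g} with hM_def
  have hM : ∀ f g : MvPolynomial (Fin n ⊕ Fin n) ℝ,
      f.IsHomogeneous 3 → g.IsHomogeneous k → pb f g ∈ M :=
    fun f g hf hg => Submodule.subset_span ⟨f, g, hf, hg, rfl⟩
  rw [h.as_sum]
  refine Submodule.sum_mem M fun d hd => ?_
  have hdeg : d.degree = k + 1 := by
    rw [Finsupp.degree_eq_weight_one]
    exact hh (MvPolynomial.mem_support_iff.mp hd)
  have h1 : (MvPolynomial.monomial d (MvPolynomial.coeff d h)) =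
      (MvPolynomial.coeff d h) • MvPolynomial.monomial d (1:ℝ) := by
    rw [MvPolynomial.smul_monomial, smul_eq_mul, mul_one]
  rw [h1]
  exact M.smul_mem _ (PoissonAux.mono_mem hk M hM d hdeg)
end

section
/- The subspace of homogeneous polynomials of degree ≥ 3 in 2n variables (with the standard Poisson bracket) is a Lie subalgebra, and its derived subalgebra (the span of all brackets of its elements) is exactly the subspace of homogeneous polynomials of degree ≥ 4; hence its abelianization is isomorphic to S³H, the cubic polynomials. -/
open MvPolynomial

/-- The subspace `⊕_{k ≥ d} SᵏH` of polynomials all of whose homogeneous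
components have degree at least `d`. -/
noncomputable def degGE (n d : ℕ) : Submodule ℝ (MvPolynomial (Fin n ⊕ Fin n) ℝ) :=
  ⨆ (k : ℕ) (_ : d ≤ k), homogeneousSubmodule (Fin n ⊕ Fin n) ℝ k

namespace Ham1Aux
open Finsupp
variable {n : ℕ}

lemma deg_add (a b : Fin n ⊕ Fin n →₀ ℕ) : (a + b).degree = a.degree + b.degree := by
  simp [Finsupp.degree_eq_weight_one, map_add]

lemma deg_single (u : Fin n ⊕ Fin n) (k : ℕ) : (Finsupp.single u k).degree = k := by
  simp [Finsupp.degree_eq_weight_one, Finsupp.weight, Finsupp.linearCombination_single]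

lemma deg_tsub_single {A : Fin n ⊕ Fin n →₀ ℕ} {u : Fin n ⊕ Fin n} (h : 1 ≤ A u) :
    (A - Finsupp.single u 1).degree + 1 = A.degree := by
  have h2 : Finsupp.single u 1 ≤ A := Finsupp.single_le_iff.mpr h
  conv_rhs => rw [← tsub_add_cancel_of_le h2]
  rw [deg_add, deg_single]

lemma degGE_eq (n d : ℕ) :
    degGE n d = AddMonoidAlgebra.supported ℝ ℝ {m : Fin n ⊕ Fin n →₀ ℕ | d ≤ m.degree} := by
  apply le_antisymm
  · apply iSup_le; intro k; apply iSup_le; intro hk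
    rw [homogeneousSubmodule_eq_finsupp_supported]
    exact AddMonoidAlgebra.supported_mono (fun x hx => le_trans hk (le_of_eq hx.symm))
  · rw [AddMonoidAlgebra.supported_eq_span_single, Submodule.span_le]
    rintro p ⟨a, ha, rfl⟩
    have h1 : (AddMonoidAlgebra.single a (1:ℝ) : MvPolynomial (Fin n ⊕ Fin n) ℝ)
        ∈ homogeneousSubmodule (Fin n ⊕ Fin n) ℝ a.degree := by
      rw [single_eq_monomial, mem_homogeneousSubmodule]
      exact isHomogeneous_monomial _ rfl
    exact (show homogeneousSubmodule (Fin n ⊕ Fin n) ℝ a.degree ≤ degGE n d from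
      le_iSup₂_of_le (f := fun (k : ℕ) (_ : d ≤ k) => homogeneousSubmodule (Fin n ⊕ Fin n) ℝ k)
      a.degree ha (le_refl (homogeneousSubmodule (Fin n ⊕ Fin n) ℝ a.degree))) h1

lemma mem_degGE {d : ℕ} {f : MvPolynomial (Fin n ⊕ Fin n) ℝ} :
    f ∈ degGE n d ↔ ∀ m : Fin n ⊕ Fin n →₀ ℕ, coeff m f ≠ 0 → d ≤ m.degree := by
  rw [degGE_eq, AddMonoidAlgebra.mem_supported']
  constructor
  · intro h m hm
    by_contra hc
    exact hm (h m (by simpa using hc))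
  · intro h m hm
    by_contra hc
    exact hm (h m hc)

lemma monomial_mem_degGE {d : ℕ} {m : Fin n ⊕ Fin n →₀ ℕ} {c : ℝ} (h : d ≤ m.degree) :
    monomial m c ∈ degGE n d := by
  rw [mem_degGE]
  intro a ha
  rw [coeff_monomial] at ha
  rcases eq_or_ne m a with rfl | hne
  · exact h
  · simp [hne] at ha

lemma pb_add_left (f g h : MvPolynomial (Fin n ⊕ Fin n) ℝ) :
    pb (f + g) h = pb f h + pb g h := by
  unfold pb
  rw [← Finset.sum_add_distrib]
  apply Finset.sum_congr rfl
  intro i _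
  simp only [map_add]
  ring

lemma pb_add_right (f g h : MvPolynomial (Fin n ⊕ Fin n) ℝ) :
    pb f (g + h) = pb f g + pb f h := by
  unfold pb
  rw [← Finset.sum_add_distrib]
  apply Finset.sum_congr rfl
  intro i _
  simp only [map_add]
  ring

lemma pb_smul_left (c : ℝ) (f h : MvPolynomial (Fin n ⊕ Fin n) ℝ) :
    pb (c • f) h = c • pb f h := by
  unfold pb
  rw [Finset.smul_sum]
  apply Finset.sum_congr rfl
  intro i _
  simp [Derivation.map_smul, smul_sub, smul_mul_assoc, mul_smul_comm]

lemma pb_smul_right (c : ℝ) (f h : MvPolynomial (Fin n ⊕ Fin n) ℝ) :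
    pb f (c • h) = c • pb f h := by
  unfold pb
  rw [Finset.smul_sum]
  apply Finset.sum_congr rfl
  intro i _
  simp [Derivation.map_smul, smul_sub, smul_mul_assoc, mul_smul_comm]

lemma pb_zero_left (h : MvPolynomial (Fin n ⊕ Fin n) ℝ) : pb 0 h = 0 := by
  unfold pb; simp

lemma pb_zero_right (h : MvPolynomial (Fin n ⊕ Fin n) ℝ) : pb h 0 = 0 := by
  unfold pb; simp

lemma pb_monomial (A B : Fin n ⊕ Fin n →₀ ℕ) :
    pb (monomial A (1:ℝ)) (monomial B 1) = ∑ i : Fin n,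
      (monomial ((A - Finsupp.single (Sum.inl i) 1) + (B - Finsupp.single (Sum.inr i) 1))
          ((A (Sum.inl i) : ℝ) * (B (Sum.inr i) : ℝ))
        - monomial ((A - Finsupp.single (Sum.inr i) 1) + (B - Finsupp.single (Sum.inl i) 1))
          ((A (Sum.inr i) : ℝ) * (B (Sum.inl i) : ℝ))) := by
  unfold pb
  apply Finset.sum_congr rfl
  intro i _
  rw [pderiv_monomial, pderiv_monomial, pderiv_monomial, pderiv_monomial, monomial_mul,
    monomial_mul]
  ring_nf

lemma pb_monomial_single (i : Fin n) (A B : Fin n ⊕ Fin n →₀ ℕ)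
    (h : ∀ j : Fin n, j ≠ i → A (Sum.inl j) * B (Sum.inr j) = 0 ∧
      A (Sum.inr j) * B (Sum.inl j) = 0) :
    pb (monomial A (1:ℝ)) (monomial B 1) =
      monomial ((A - Finsupp.single (Sum.inl i) 1) + (B - Finsupp.single (Sum.inr i) 1))
          ((A (Sum.inl i) : ℝ) * (B (Sum.inr i) : ℝ))
        - monomial ((A - Finsupp.single (Sum.inr i) 1) + (B - Finsupp.single (Sum.inl i) 1))
          ((A (Sum.inr i) : ℝ) * (B (Sum.inl i) : ℝ)) := by
  rw [pb_monomial]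
  apply Finset.sum_eq_single_of_mem i (Finset.mem_univ i)
  intro j _ hj
  have h1 := (h j hj).1
  have h2 := (h j hj).2
  rw [show ((A (Sum.inl j) : ℝ) * (B (Sum.inr j) : ℝ))
      = ((A (Sum.inl j) * B (Sum.inr j) : ℕ) : ℝ) by push_cast; ring,
    show ((A (Sum.inr j) : ℝ) * (B (Sum.inl j) : ℝ))
      = ((A (Sum.inr j) * B (Sum.inl j) : ℕ) : ℝ) by push_cast; ring,
    h1, h2]
  simp

lemma pb_mem {f g : MvPolynomial (Fin n ⊕ Fin n) ℝ}
    (hf : f ∈ degGE n 3) (hg : g ∈ degGE n 3) : pb f g ∈ degGE n 4 := by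
  have Hmono : ∀ A B : Fin n ⊕ Fin n →₀ ℕ, 3 ≤ A.degree → 3 ≤ B.degree →
      pb (monomial A (1:ℝ)) (monomial B 1) ∈ degGE n 4 := by
    intro A B hA hB
    rw [pb_monomial]
    apply Submodule.sum_mem
    intro i _
    apply Submodule.sub_mem
    · rcases Nat.eq_zero_or_pos (A (Sum.inl i)) with h | h
      · simp [h]
      rcases Nat.eq_zero_or_pos (B (Sum.inr i)) with h' | h'
      · simp [h']
      · apply monomial_mem_degGE
        rw [deg_add]
        have t1 := deg_tsub_single (A := A) (u := Sum.inl i) h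
        have t2 := deg_tsub_single (A := B) (u := Sum.inr i) h'
        omega
    · rcases Nat.eq_zero_or_pos (A (Sum.inr i)) with h | h
      · simp [h]
      rcases Nat.eq_zero_or_pos (B (Sum.inl i)) with h' | h'
      · simp [h']
      · apply monomial_mem_degGE
        rw [deg_add]
        have t1 := deg_tsub_single (A := A) (u := Sum.inr i) h
        have t2 := deg_tsub_single (A := B) (u := Sum.inl i) h'
        omega
  have key : ∀ A : Fin n ⊕ Fin n →₀ ℕ, 3 ≤ A.degree → ∀ g ∈ degGE n 3,
      pb (monomial A (1:ℝ)) g ∈ degGE n 4 := by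
    intro A hA g hg
    rw [degGE_eq, AddMonoidAlgebra.supported_eq_span_single] at hg
    induction hg using Submodule.span_induction with
    | mem x hx =>
      obtain ⟨B, hB, rfl⟩ := hx
      simp only [single_eq_monomial]
      exact Hmono A B hA hB
    | zero => rw [pb_zero_right]; exact zero_mem _
    | add x y _ _ hx hy => rw [pb_add_right]; exact add_mem hx hy
    | smul c x _ hx => rw [pb_smul_right]; exact Submodule.smul_mem _ _ hx
  rw [degGE_eq, AddMonoidAlgebra.supported_eq_span_single] at hf
  induction hf using Submodule.span_induction with
  | mem x hx =>
    obtain ⟨A, hA, rfl⟩ := hx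
    simp only [single_eq_monomial]
    exact key A hA g hg
  | zero => rw [pb_zero_left]; exact zero_mem _
  | add x y _ _ hx hy => rw [pb_add_left]; exact add_mem hx hy
  | smul c x _ hx => rw [pb_smul_left]; exact Submodule.smul_mem _ _ hx

lemma case1 (m : Fin n ⊕ Fin n →₀ ℕ) (i : Fin n) (hdeg : 4 ≤ m.degree)
    (h2 : 2 ≤ m (Sum.inl i)) :
    ∃ f g, ∃ c : ℝ, f ∈ degGE n 3 ∧ g ∈ degGE n 3 ∧ c ≠ 0 ∧ pb f g = monomial m c := by
  have hle : Finsupp.single (Sum.inl i) 2 ≤ m := Finsupp.single_le_iff.mpr h2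
  set m' := m - Finsupp.single (Sum.inl i) 2 with hm'
  have hdecomp : m' + Finsupp.single (Sum.inl i) 2 = m := tsub_add_cancel_of_le hle
  have hdegm : m'.degree + 2 = m.degree := by
    conv_rhs => rw [← hdecomp]
    rw [deg_add, deg_single]
  set A := m' + Finsupp.single (Sum.inr i) 1 with hA
  refine ⟨monomial A 1, monomial (Finsupp.single (Sum.inl i) 3) 1,
    -(((m' (Sum.inr i) + 1 : ℕ) : ℝ) * 3), ?_, ?_, ?_, ?_⟩
  · apply monomial_mem_degGE
    rw [deg_add, deg_single]
    omega
  · apply monomial_mem_degGE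
    rw [deg_single]
  · apply neg_ne_zero.mpr
    positivity
  · rw [pb_monomial_single i]
    · have e1 : (Finsupp.single (Sum.inl i) 3 : Fin n ⊕ Fin n →₀ ℕ) (Sum.inr i) = 0 :=
        Finsupp.single_eq_of_ne (by simp)
      have e2 : A (Sum.inr i) = m' (Sum.inr i) + 1 := by
        rw [hA, Finsupp.add_apply, Finsupp.single_eq_same]
      have e3 : (Finsupp.single (Sum.inl i) 3 : Fin n ⊕ Fin n →₀ ℕ) (Sum.inl i) = 3 :=
        Finsupp.single_eq_same
      have e4 : A - Finsupp.single (Sum.inr i) 1 = m' := by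
        rw [hA, add_tsub_cancel_right]
      have e5 : (Finsupp.single (Sum.inl i) 3 : Fin n ⊕ Fin n →₀ ℕ)
          - Finsupp.single (Sum.inl i) 1 = Finsupp.single (Sum.inl i) 2 := by
        rw [← Finsupp.single_tsub]
      rw [e1, e2, e3, e4, e5, hdecomp]
      push_cast
      simp [monomial_zero]
    · intro j hj
      constructor
      · rw [Finsupp.single_eq_of_ne (by simp), mul_zero]
      · rw [Finsupp.single_eq_of_ne' (by simpa using Ne.symm hj), mul_zero]

lemma case2 (m : Fin n ⊕ Fin n →₀ ℕ) (i : Fin n) (hdeg : 4 ≤ m.degree)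
    (h2 : 2 ≤ m (Sum.inr i)) :
    ∃ f g, ∃ c : ℝ, f ∈ degGE n 3 ∧ g ∈ degGE n 3 ∧ c ≠ 0 ∧ pb f g = monomial m c := by
  have hle : Finsupp.single (Sum.inr i) 2 ≤ m := Finsupp.single_le_iff.mpr h2
  set m' := m - Finsupp.single (Sum.inr i) 2 with hm'
  have hdecomp : m' + Finsupp.single (Sum.inr i) 2 = m := tsub_add_cancel_of_le hle
  have hdegm : m'.degree + 2 = m.degree := by
    conv_rhs => rw [← hdecomp]
    rw [deg_add, deg_single]
  set A := m' + Finsupp.single (Sum.inl i) 1 with hA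
  refine ⟨monomial A 1, monomial (Finsupp.single (Sum.inr i) 3) 1,
    (((m' (Sum.inl i) + 1 : ℕ) : ℝ) * 3), ?_, ?_, ?_, ?_⟩
  · apply monomial_mem_degGE
    rw [deg_add, deg_single]
    omega
  · apply monomial_mem_degGE
    rw [deg_single]
  · positivity
  · rw [pb_monomial_single i]
    · have e1 : (Finsupp.single (Sum.inr i) 3 : Fin n ⊕ Fin n →₀ ℕ) (Sum.inl i) = 0 :=
        Finsupp.single_eq_of_ne (by simp)
      have e2 : A (Sum.inl i) = m' (Sum.inl i) + 1 := by
        rw [hA, Finsupp.add_apply, Finsupp.single_eq_same]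
      have e3 : (Finsupp.single (Sum.inr i) 3 : Fin n ⊕ Fin n →₀ ℕ) (Sum.inr i) = 3 :=
        Finsupp.single_eq_same
      have e4 : A - Finsupp.single (Sum.inl i) 1 = m' := by
        rw [hA, add_tsub_cancel_right]
      have e5 : (Finsupp.single (Sum.inr i) 3 : Fin n ⊕ Fin n →₀ ℕ)
          - Finsupp.single (Sum.inr i) 1 = Finsupp.single (Sum.inr i) 2 := by
        rw [← Finsupp.single_tsub]
      rw [e1, e2, e3, e4, e5, hdecomp]
      push_cast
      simp [monomial_zero]
    · intro j hj
      constructor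
      · rw [Finsupp.single_eq_of_ne' (by simpa using Ne.symm hj), mul_zero]
      · rw [Finsupp.single_eq_of_ne (by simp), mul_zero]

lemma case3 (m : Fin n ⊕ Fin n →₀ ℕ) (i : Fin n) (hdeg : 4 ≤ m.degree)
    (h1 : m (Sum.inl i) = 1) (h2 : 1 ≤ m (Sum.inr i)) :
    ∃ f g, ∃ c : ℝ, f ∈ degGE n 3 ∧ g ∈ degGE n 3 ∧ c ≠ 0 ∧ pb f g = monomial m c := by
  set s : Fin n ⊕ Fin n →₀ ℕ :=
    Finsupp.single (Sum.inl i) 1 + Finsupp.single (Sum.inr i) 1 with hs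
  have hle : s ≤ m := by
    rw [Finsupp.le_def]
    intro t
    rw [hs, Finsupp.add_apply]
    rcases eq_or_ne t (Sum.inl i) with rfl | ht1
    · rw [Finsupp.single_eq_same, Finsupp.single_eq_of_ne (by simp)]
      omega
    · rw [Finsupp.single_eq_of_ne' (Ne.symm ht1)]
      rcases eq_or_ne t (Sum.inr i) with rfl | ht2
      · rw [Finsupp.single_eq_same]
        omega
      · rw [Finsupp.single_eq_of_ne' (Ne.symm ht2)]
        simp
  set m' := m - s with hm'
  have hdecomp : m' + s = m := tsub_add_cancel_of_le hle
  have hsdeg : s.degree = 2 := by rw [hs, deg_add, deg_single, deg_single]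
  have hdegm : m'.degree + 2 = m.degree := by
    conv_rhs => rw [← hdecomp]
    rw [deg_add, hsdeg]
  have hsu : s (Sum.inl i) = 1 := by
    simp [hs, Finsupp.add_apply, Finsupp.single_apply]
  have hmu' : m' (Sum.inl i) = 0 := by
    have h3 : m' (Sum.inl i) + s (Sum.inl i) = m (Sum.inl i) := by
      rw [← Finsupp.add_apply, hdecomp]
    omega
  set A := m' + Finsupp.single (Sum.inr i) 1 with hA
  set B := s + Finsupp.single (Sum.inl i) 1 with hB
  refine ⟨monomial A 1, monomial B 1,
    -(((m' (Sum.inr i) + 1 : ℕ) : ℝ) * 2), ?_, ?_, ?_, ?_⟩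
  · apply monomial_mem_degGE
    rw [hA, deg_add, deg_single]
    omega
  · apply monomial_mem_degGE
    rw [hB, deg_add, deg_single, hsdeg]
  · apply neg_ne_zero.mpr
    positivity
  · rw [pb_monomial_single i]
    · have e1 : A (Sum.inl i) = 0 := by
        simp [hA, Finsupp.add_apply, Finsupp.single_apply, hmu']
      have e2 : A (Sum.inr i) = m' (Sum.inr i) + 1 := by
        rw [hA, Finsupp.add_apply, Finsupp.single_eq_same]
      have e3 : B (Sum.inl i) = 2 := by
        simp [hB, hs, Finsupp.add_apply, Finsupp.single_apply]
      have e4 : A - Finsupp.single (Sum.inr i) 1 = m' := by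
        rw [hA, add_tsub_cancel_right]
      have e5 : B - Finsupp.single (Sum.inl i) 1 = s := by
        rw [hB, add_tsub_cancel_right]
      rw [e1, e2, e3, e4, e5, hdecomp]
      push_cast
      simp [monomial_zero]
    · intro j hj
      have hij : i ≠ j := Ne.symm hj
      constructor
      · have hz : B (Sum.inr j) = 0 := by
          simp [hB, hs, Finsupp.add_apply, Finsupp.single_apply, hij]
        rw [hz, mul_zero]
      · have hz : B (Sum.inl j) = 0 := by
          simp [hB, hs, Finsupp.add_apply, Finsupp.single_apply, hij]
        rw [hz, mul_zero]

lemma case4l (m : Fin n ⊕ Fin n →₀ ℕ) (i : Fin n) (w : Fin n ⊕ Fin n) (hdeg : 4 ≤ m.degree)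
    (hmu : 1 ≤ m (Sum.inl i)) (hw : 1 ≤ m w) (hw1 : w ≠ Sum.inl i) (hw2 : w ≠ Sum.inr i)
    (hswap : m (Sum.swap w) = 0) :
    ∃ f g, ∃ c : ℝ, f ∈ degGE n 3 ∧ g ∈ degGE n 3 ∧ c ≠ 0 ∧ pb f g = monomial m c := by
  set s : Fin n ⊕ Fin n →₀ ℕ := Finsupp.single (Sum.inl i) 1 + Finsupp.single w 1 with hs
  have hle : s ≤ m := by
    rw [Finsupp.le_def]
    intro t
    rw [hs, Finsupp.add_apply]
    rcases eq_or_ne t (Sum.inl i) with rfl | ht1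
    · rw [Finsupp.single_eq_same, Finsupp.single_eq_of_ne' hw1]
      omega
    · rw [Finsupp.single_eq_of_ne' (Ne.symm ht1)]
      rcases eq_or_ne t w with rfl | ht2
      · rw [Finsupp.single_eq_same]
        omega
      · rw [Finsupp.single_eq_of_ne' (Ne.symm ht2)]
        simp
  set m' := m - s with hm'
  have hdecomp : m' + s = m := tsub_add_cancel_of_le hle
  have hsdeg : s.degree = 2 := by rw [hs, deg_add, deg_single, deg_single]
  have hdegm : m'.degree + 2 = m.degree := by
    conv_rhs => rw [← hdecomp]
    rw [deg_add, hsdeg]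
  set A := m' + Finsupp.single (Sum.inr i) 1 with hA
  set B := s + Finsupp.single (Sum.inl i) 1 with hB
  refine ⟨monomial A 1, monomial B 1,
    -(((m' (Sum.inr i) + 1 : ℕ) : ℝ) * 2), ?_, ?_, ?_, ?_⟩
  · apply monomial_mem_degGE
    rw [hA, deg_add, deg_single]
    omega
  · apply monomial_mem_degGE
    rw [hB, deg_add, deg_single, hsdeg]
  · apply neg_ne_zero.mpr
    positivity
  · rw [pb_monomial_single i]
    · have e1 : B (Sum.inr i) = 0 := by
        simp [hB, hs, Finsupp.add_apply, Finsupp.single_apply, hw2]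
      have e2 : A (Sum.inr i) = m' (Sum.inr i) + 1 := by
        rw [hA, Finsupp.add_apply, Finsupp.single_eq_same]
      have e3 : B (Sum.inl i) = 2 := by
        simp [hB, hs, Finsupp.add_apply, Finsupp.single_apply, hw1]
      have e4 : A - Finsupp.single (Sum.inr i) 1 = m' := by
        rw [hA, add_tsub_cancel_right]
      have e5 : B - Finsupp.single (Sum.inl i) 1 = s := by
        rw [hB, add_tsub_cancel_right]
      rw [e1, e2, e3, e4, e5, hdecomp]
      push_cast
      simp [monomial_zero]
    · intro j hj
      have hij : i ≠ j := Ne.symm hj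
      constructor
      · rcases eq_or_ne w (Sum.inr j) with rfl | hne
        · have hz : A (Sum.inl j) = 0 := by
            have hm0 : m (Sum.inl j) = 0 := by simpa using hswap
            simp [hA, hm', Finsupp.add_apply, Finsupp.tsub_apply, Finsupp.single_apply, hm0]
          rw [hz, zero_mul]
        · have hz : B (Sum.inr j) = 0 := by
            simp [hB, hs, Finsupp.add_apply, Finsupp.single_apply, hne, hij]
          rw [hz, mul_zero]
      · rcases eq_or_ne w (Sum.inl j) with rfl | hne
        · have hz : A (Sum.inr j) = 0 := by
            have hm0 : m (Sum.inr j) = 0 := by simpa using hswap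
            simp [hA, hm', Finsupp.add_apply, Finsupp.tsub_apply, Finsupp.single_apply, hm0, hij]
          rw [hz, zero_mul]
        · have hz : B (Sum.inl j) = 0 := by
            simp [hB, hs, Finsupp.add_apply, Finsupp.single_apply, hne, hij]
          rw [hz, mul_zero]

lemma case4r (m : Fin n ⊕ Fin n →₀ ℕ) (i : Fin n) (w : Fin n ⊕ Fin n) (hdeg : 4 ≤ m.degree)
    (hmu : 1 ≤ m (Sum.inr i)) (hw : 1 ≤ m w) (hw1 : w ≠ Sum.inl i) (hw2 : w ≠ Sum.inr i)
    (hswap : m (Sum.swap w) = 0) :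
    ∃ f g, ∃ c : ℝ, f ∈ degGE n 3 ∧ g ∈ degGE n 3 ∧ c ≠ 0 ∧ pb f g = monomial m c := by
  set s : Fin n ⊕ Fin n →₀ ℕ := Finsupp.single (Sum.inr i) 1 + Finsupp.single w 1 with hs
  have hle : s ≤ m := by
    rw [Finsupp.le_def]
    intro t
    rw [hs, Finsupp.add_apply]
    rcases eq_or_ne t (Sum.inr i) with rfl | ht1
    · rw [Finsupp.single_eq_same, Finsupp.single_eq_of_ne' hw2]
      omega
    · rw [Finsupp.single_eq_of_ne' (Ne.symm ht1)]
      rcases eq_or_ne t w with rfl | ht2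
      · rw [Finsupp.single_eq_same]
        omega
      · rw [Finsupp.single_eq_of_ne' (Ne.symm ht2)]
        simp
  set m' := m - s with hm'
  have hdecomp : m' + s = m := tsub_add_cancel_of_le hle
  have hsdeg : s.degree = 2 := by rw [hs, deg_add, deg_single, deg_single]
  have hdegm : m'.degree + 2 = m.degree := by
    conv_rhs => rw [← hdecomp]
    rw [deg_add, hsdeg]
  set A := m' + Finsupp.single (Sum.inl i) 1 with hA
  set B := s + Finsupp.single (Sum.inr i) 1 with hB
  refine ⟨monomial A 1, monomial B 1,
    (((m' (Sum.inl i) + 1 : ℕ) : ℝ) * 2), ?_, ?_, ?_, ?_⟩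
  · apply monomial_mem_degGE
    rw [hA, deg_add, deg_single]
    omega
  · apply monomial_mem_degGE
    rw [hB, deg_add, deg_single, hsdeg]
  · positivity
  · rw [pb_monomial_single i]
    · have e1 : B (Sum.inl i) = 0 := by
        simp [hB, hs, Finsupp.add_apply, Finsupp.single_apply, hw1]
      have e2 : A (Sum.inl i) = m' (Sum.inl i) + 1 := by
        rw [hA, Finsupp.add_apply, Finsupp.single_eq_same]
      have e3 : B (Sum.inr i) = 2 := by
        simp [hB, hs, Finsupp.add_apply, Finsupp.single_apply, hw2]
      have e4 : A - Finsupp.single (Sum.inl i) 1 = m' := by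
        rw [hA, add_tsub_cancel_right]
      have e5 : B - Finsupp.single (Sum.inr i) 1 = s := by
        rw [hB, add_tsub_cancel_right]
      rw [e1, e2, e3, e4, e5, hdecomp]
      push_cast
      simp [monomial_zero]
    · intro j hj
      have hij : i ≠ j := Ne.symm hj
      constructor
      · rcases eq_or_ne w (Sum.inr j) with rfl | hne
        · have hz : A (Sum.inl j) = 0 := by
            have hm0 : m (Sum.inl j) = 0 := by simpa using hswap
            simp [hA, hm', Finsupp.add_apply, Finsupp.tsub_apply, Finsupp.single_apply, hm0, hij]
          rw [hz, zero_mul]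
        · have hz : B (Sum.inr j) = 0 := by
            simp [hB, hs, Finsupp.add_apply, Finsupp.single_apply, hne, hij]
          rw [hz, mul_zero]
      · rcases eq_or_ne w (Sum.inl j) with rfl | hne
        · have hz : A (Sum.inr j) = 0 := by
            have hm0 : m (Sum.inr j) = 0 := by simpa using hswap
            simp [hA, hm', Finsupp.add_apply, Finsupp.tsub_apply, Finsupp.single_apply, hm0]
          rw [hz, zero_mul]
        · have hz : B (Sum.inl j) = 0 := by
            simp [hB, hs, Finsupp.add_apply, Finsupp.single_apply, hne, hij]
          rw [hz, mul_zero]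


lemma key (m : Fin n ⊕ Fin n →₀ ℕ) (hm : 4 ≤ m.degree) :
    ∃ f g, ∃ c : ℝ, f ∈ degGE n 3 ∧ g ∈ degGE n 3 ∧ c ≠ 0 ∧ pb f g = monomial m c := by
  by_cases hc1 : ∃ w, 2 ≤ m w
  · obtain ⟨w, hw⟩ := hc1
    rcases w with i | i
    · exact case1 m i hm hw
    · exact case2 m i hm hw
  push_neg at hc1
  by_cases hc2 : ∃ i : Fin n, m (Sum.inl i) = 1 ∧ 1 ≤ m (Sum.inr i)
  · obtain ⟨i, h1, h2⟩ := hc2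
    exact case3 m i hm h1 h2
  push_neg at hc2
  have hswap : ∀ t : Fin n ⊕ Fin n, 1 ≤ m t → m (Sum.swap t) = 0 := by
    intro t ht
    rcases t with i | i
    · have ha := hc1 (Sum.inl i)
      have h1 : m (Sum.inl i) = 1 := by omega
      have h2 := hc2 i h1
      rw [Sum.swap_inl]
      omega
    · rw [Sum.swap_inr]
      by_contra h0
      have ha := hc1 (Sum.inl i)
      have h1 : m (Sum.inl i) = 1 := by omega
      have h2 := hc2 i h1
      omega
  have hcard : 2 ≤ m.support.card := by
    have hsum : m.degree ≤ m.support.card := by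
      have h := Finset.sum_le_card_nsmul m.support m 1 (fun i _ => by have := hc1 i; omega)
      simpa [Finsupp.degree_apply, smul_eq_mul, mul_one] using h
    omega
  obtain ⟨u, hu, w, hww, huw⟩ := Finset.one_lt_card.mp (show 1 < m.support.card by omega)
  have hu1 : 1 ≤ m u := by
    rw [Finsupp.mem_support_iff, ← Nat.one_le_iff_ne_zero] at hu
    exact hu
  have hw1 : 1 ≤ m w := by
    rw [Finsupp.mem_support_iff, ← Nat.one_le_iff_ne_zero] at hww
    exact hww
  have hwsu : w ≠ Sum.swap u := by
    intro h
    have := hswap u hu1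
    rw [← h] at this
    omega
  rcases u with i | i
  · exact case4l m i w hm hu1 hw1 (Ne.symm huw) (by simpa using hwsu) (hswap w hw1)
  · exact case4r m i w hm hu1 hw1 (by simpa using hwsu) (Ne.symm huw) (hswap w hw1)

end Ham1Aux

/-- The polynomials of degree ≥ 3 form a Lie subalgebra under the Poisson bracket,
its derived subalgebra is exactly the subspace of polynomials of degree ≥ 4, and
hence its abelianization is isomorphic to `S³H`. -/
theorem ham1_derived_and_abelianization (n : ℕ) :
    (∀ f ∈ degGE n 3, ∀ g ∈ degGE n 3, pb f g ∈ degGE n 3) ∧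
    (Submodule.span ℝ
        {p : MvPolynomial (Fin n ⊕ Fin n) ℝ |
          ∃ f ∈ degGE n 3, ∃ g ∈ degGE n 3, p = pb f g} = degGE n 4) ∧
    Nonempty
      ((↥(degGE n 3) ⧸ (Submodule.comap (degGE n 3).subtype (degGE n 4)))
        ≃ₗ[ℝ] ↥(homogeneousSubmodule (Fin n ⊕ Fin n) ℝ 3)) := by
  have h43 : degGE n 4 ≤ degGE n 3 := by
    rw [Ham1Aux.degGE_eq, Ham1Aux.degGE_eq]
    exact AddMonoidAlgebra.supported_mono (fun x hx => le_trans (show (3:ℕ) ≤ 4 by norm_num) hx)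
  refine ⟨fun f hf g hg => h43 (Ham1Aux.pb_mem hf hg), ?_, ?_⟩
  · apply le_antisymm
    · rw [Submodule.span_le]
      rintro p ⟨f, hf, g, hg, rfl⟩
      exact Ham1Aux.pb_mem hf hg
    · rw [Ham1Aux.degGE_eq, AddMonoidAlgebra.supported_eq_span_single, Submodule.span_le]
      rintro p ⟨a, ha, rfl⟩
      obtain ⟨f, g, c, hf, hg, hc, hpb⟩ := Ham1Aux.key a ha
      have heq : (AddMonoidAlgebra.single a (1:ℝ) : MvPolynomial (Fin n ⊕ Fin n) ℝ)
          = c⁻¹ • pb f g := by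
        rw [hpb, single_eq_monomial, smul_monomial, smul_eq_mul, inv_mul_cancel₀ hc]
      beta_reduce
      rw [SetLike.mem_coe, heq]
      exact Submodule.smul_mem _ _ (Submodule.subset_span ⟨f, hf, g, hg, rfl⟩)
  · set φ : ↥(degGE n 3) →ₗ[ℝ] ↥(homogeneousSubmodule (Fin n ⊕ Fin n) ℝ 3) :=
      LinearMap.codRestrict _ ((homogeneousComponent 3).comp (degGE n 3).subtype)
        (fun x => homogeneousComponent_mem 3 _) with hφ
    have hφval : ∀ x : ↥(degGE n 3),
        (φ x : MvPolynomial (Fin n ⊕ Fin n) ℝ) = homogeneousComponent 3 (x : MvPolynomial (Fin n ⊕ Fin n) ℝ) := by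
      intro x; rfl
    have hker : LinearMap.ker φ = Submodule.comap (degGE n 3).subtype (degGE n 4) := by
      ext x
      simp only [LinearMap.mem_ker, Submodule.mem_comap, Submodule.subtype_apply]
      constructor
      · intro h0
        have h0' : homogeneousComponent 3 (x : MvPolynomial (Fin n ⊕ Fin n) ℝ) = 0 := by
          rw [← hφval x, h0, Submodule.coe_zero]
        rw [Ham1Aux.mem_degGE]
        intro d hd
        have h3 := (Ham1Aux.mem_degGE.mp x.2) d hd
        rcases eq_or_lt_of_le h3 with heq | hlt
        · exfalso
          have hco := coeff_homogeneousComponent (σ := Fin n ⊕ Fin n) (R := ℝ)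
            3 (x : MvPolynomial (Fin n ⊕ Fin n) ℝ) d
          rw [h0', coeff_zero, if_pos heq.symm] at hco
          exact hd hco.symm
        · omega
      · intro h4
        apply Subtype.ext
        rw [hφval x, Submodule.coe_zero]
        ext d
        rw [coeff_homogeneousComponent, coeff_zero]
        split_ifs with hdeg
        · by_contra hne
          have := (Ham1Aux.mem_degGE.mp h4) d hne
          omega
        · rfl
    have hsurj : Function.Surjective φ := by
      intro p
      have hp3 : (p : MvPolynomial (Fin n ⊕ Fin n) ℝ) ∈ degGE n 3 := by
        have h2 : (p : MvPolynomial (Fin n ⊕ Fin n) ℝ)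
            ∈ AddMonoidAlgebra.supported ℝ ℝ {d : Fin n ⊕ Fin n →₀ ℕ | d.degree = 3} := by
          rw [← homogeneousSubmodule_eq_finsupp_supported]
          exact p.2
        rw [AddMonoidAlgebra.mem_supported] at h2
        refine Ham1Aux.mem_degGE.mpr ?_
        intro d hd
        have hds : d ∈ (p : MvPolynomial (Fin n ⊕ Fin n) ℝ).support :=
          MvPolynomial.mem_support_iff.mpr hd
        exact le_of_eq (h2 hds).symm
      refine ⟨⟨(p : MvPolynomial (Fin n ⊕ Fin n) ℝ), hp3⟩, ?_⟩
      apply Subtype.ext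
      rw [hφval]
      show homogeneousComponent 3 (p : MvPolynomial (Fin n ⊕ Fin n) ℝ) = (p : MvPolynomial (Fin n ⊕ Fin n) ℝ)
      rw [homogeneousComponent_of_mem p.2, if_pos rfl]
    exact ⟨(Submodule.quotEquivOfEq _ _ hker.symm).trans
      (φ.quotKerEquivOfSurjective hsurj)⟩
end
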